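/- Let κ be an infinite cardinal with κ < 𝔱 (the tower number) and cf(κ) = ω. Then for every colouring c : [κ]² → ω there exists a cofinal subset B ⊆ κ such that for every η < κ, c[{η} ⊛ B] ≠ ω, i.e., c restricted to pairs with first coordinate η omits some colour on B. -/

import Mathlib

open Cardinal Ordinal Set
open scoped Classical

/-- The tower number 𝔱: the least length (in cardinality) of a `⊆*`-decreasing sequence of
infinite subsets of ω with no infinite pseudo-intersection. -/
noncomputable def towerNumber : Cardinal :=
  sInf { c : Cardinal | ∃ o : Ordinal, o.card = c ∧
    ∃ T : Ordinal → Set ℕ,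
      (∀ i < o, (T i).Infinite) ∧
      (∀ i j : Ordinal, i < j → j < o → (T j \ T i).Finite) ∧
      ¬ ∃ X : Set ℕ, X.Infinite ∧ ∀ i < o, (X \ T i).Finite }

lemma exists_pi {κ : Cardinal} (hlt : κ < towerNumber) {o : Ordinal} (ho : o.card ≤ κ)
    {T : Ordinal → Set ℕ} (h1 : ∀ i < o, (T i).Infinite)
    (h2 : ∀ i j : Ordinal, i < j → j < o → (T j \ T i).Finite) :
    ∃ X : Set ℕ, X.Infinite ∧ ∀ i < o, (X \ T i).Finite := by
  by_contra h
  have : towerNumber ≤ o.card := csInf_le' ⟨o, rfl, T, h1, h2, h⟩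
  exact absurd (this.trans ho) hlt.not_ge

lemma shrink (f : ℕ → ℕ) {P : Set ℕ} (hP : P.Infinite) :
    ∃ A, A ⊆ P ∧ A.Infinite ∧ ((f '' A)ᶜ).Infinite := by
  by_cases hk : ∃ k, (P ∩ f ⁻¹' {k}).Infinite
  · obtain ⟨k, hk⟩ := hk
    refine ⟨P ∩ f ⁻¹' {k}, inter_subset_left, hk, ?_⟩
    have h1 : f '' (P ∩ f ⁻¹' {k}) ⊆ {k} := by rintro x ⟨y, hy, rfl⟩; exact hy.2
    exact ((Set.finite_singleton k).infinite_compl).mono (compl_subset_compl.2 h1)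
  · push_neg at hk
    have hIic : ∀ m : ℕ, (P ∩ f ⁻¹' (Set.Iic m)).Finite := by
      intro m
      have hsub : P ∩ f ⁻¹' (Set.Iic m) ⊆ ⋃ k ∈ Set.Iic m, P ∩ f ⁻¹' {k} := by
        rintro x ⟨hx, hx2⟩
        exact Set.mem_biUnion hx2 ⟨hx, rfl⟩
      exact ((Set.finite_Iic m).biUnion fun k _ => hk k).subset hsub
    have key : ∀ m : ℕ, ∃ x, x ∈ P ∧ m + 2 ≤ f x := by
      intro m
      obtain ⟨x, hx⟩ := (hP.diff (hIic (m + 1))).nonempty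
      refine ⟨x, hx.1, ?_⟩
      by_contra hcon
      exact hx.2 ⟨hx.1, by simp only [Set.mem_preimage, Set.mem_Iic]; omega⟩
    choose F hF1 hF2 using key
    set a : ℕ → ℕ := fun n => Nat.rec (F 0) (fun _ prev => F (f prev)) n with ha
    have haP : ∀ n, a n ∈ P := by intro n; cases n with
      | zero => exact hF1 0
      | succ m => exact hF1 _
    have hgap : ∀ n, f (a n) + 2 ≤ f (a (n + 1)) := fun n => hF2 (f (a n))
    have hmono : StrictMono (fun n => f (a n)) :=
      strictMono_nat_of_lt_succ (fun n => by have := hgap n; omega)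
    have hinj : Function.Injective a := fun m n h => hmono.injective (congrArg f h)
    refine ⟨Set.range a, ?_, Set.infinite_range_of_injective hinj, ?_⟩
    · rintro x ⟨n, rfl⟩; exact haP n
    · have hsub : Set.range (fun n => f (a n) + 1) ⊆ (f '' Set.range a)ᶜ := by
        rintro x ⟨n, rfl⟩ ⟨y, ⟨m, rfl⟩, hy⟩
        simp only at hy
        rcases le_or_gt m n with h | h
        · have h2 : f (a m) ≤ f (a n) := hmono.monotone h
          omega
        · have h2 : f (a (n + 1)) ≤ f (a m) := hmono.monotone h
          have := hgap n; omega
      refine (Set.infinite_range_of_injective ?_).mono hsub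
      intro m n h
      simp only at h
      exact hmono.injective (by omega)

noncomputable def tstep (f : ℕ → ℕ) (T : Set ℕ) : Set ℕ :=
  if h2 : ∃ A, A ⊆ T ∧ A.Infinite ∧ ((f '' A)ᶜ).Infinite then h2.choose else Set.univ

lemma tstep_spec {f : ℕ → ℕ} {T : Set ℕ}
    (h : ∃ A, A ⊆ T ∧ A.Infinite ∧ ((f '' A)ᶜ).Infinite) :
    tstep f T ⊆ T ∧ (tstep f T).Infinite ∧ ((f '' tstep f T)ᶜ).Infinite := by
  unfold tstep
  rw [dif_pos h]
  exact h.choose_spec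

noncomputable def pint (i : Ordinal) (T : Ordinal → Set ℕ) : Set ℕ :=
  if h : ∃ X : Set ℕ, X.Infinite ∧ ∀ j < i, (X \ T j).Finite then h.choose else Set.univ

lemma pint_spec {i : Ordinal} {T : Ordinal → Set ℕ}
    (h : ∃ X : Set ℕ, X.Infinite ∧ ∀ j < i, (X \ T j).Finite) :
    (pint i T).Infinite ∧ ∀ j < i, (pint i T \ T j).Finite := by
  unfold pint
  rw [dif_pos h]
  exact h.choose_spec

noncomputable def tseq (f : Ordinal → ℕ → ℕ) : Ordinal → Set ℕ :=
  (wellFounded_lt (α := Ordinal)).fix fun i g =>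
    tstep (f i) (pint i (fun j => if hj : j < i then g j hj else ∅))

lemma tseq_eq (f : Ordinal → ℕ → ℕ) (i : Ordinal) :
    tseq f i = tstep (f i) (pint i (fun j => if _ : j < i then tseq f j else ∅)) :=
  WellFounded.fix_eq _ _ i

lemma tseq_inv {κ : Cardinal} (hlt : κ < towerNumber) (f : Ordinal → ℕ → ℕ) :
    ∀ i, i ≤ κ.ord → (tseq f i).Infinite ∧ (∀ j < i, (tseq f i \ tseq f j).Finite) ∧
      ((f i '' tseq f i)ᶜ).Infinite := by
  intro i
  induction i using Ordinal.induction with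
  | h i IH =>
  intro hi
  have hpi : ∃ X : Set ℕ, X.Infinite ∧
      ∀ j < i, (X \ (if _ : j < i then tseq f j else ∅)).Finite := by
    obtain ⟨X, hX1, hX2⟩ := exists_pi hlt
      ((Ordinal.card_le_card hi).trans (le_of_eq (Cardinal.card_ord κ)))
      (fun j hj => (IH j hj (hj.le.trans hi)).1)
      (fun j1 j2 hj hj2 => (IH j2 hj2 (hj2.le.trans hi)).2.1 j1 hj)
    exact ⟨X, hX1, fun j hj => by rw [dif_pos hj]; exact hX2 j hj⟩
  have hps := pint_spec hpi
  have hsh := shrink (f i) hps.1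
  have hts := tstep_spec hsh
  rw [tseq_eq]
  refine ⟨hts.2.1, fun j hj => ?_, hts.2.2⟩
  have h2 := hps.2 j hj
  rw [dif_pos hj] at h2
  exact h2.subset (Set.diff_subset_diff_left hts.1)

theorem stmt_3 (κ : Cardinal) (hκ : ℵ₀ ≤ κ) (hlt : κ < towerNumber)
    (hcf : (κ.ord).cof = ℵ₀)
    (c : Ordinal → Ordinal → ℕ) :
    ∃ B : Set Ordinal, B ⊆ Set.Iio κ.ord ∧ (∀ α < κ.ord, ∃ β ∈ B, α ≤ β) ∧
      ∀ η < κ.ord, {n : ℕ | ∃ β ∈ B, η < β ∧ c η β = n} ≠ Set.univ := by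
  have hlim : Order.IsSuccLimit κ.ord := Cardinal.isSuccLimit_ord hκ
  -- a countable cofinal sequence
  obtain ⟨ι, g, hg, hcard⟩ := Ordinal.exists_lsub_cof κ.ord
  rw [hcf] at hcard
  have hcount : Countable ι := Cardinal.mk_le_aleph0_iff.1 hcard.le
  have hne : Nonempty ι := Cardinal.mk_ne_zero_iff.1 (by rw [hcard]; exact Cardinal.aleph0_ne_zero)
  obtain ⟨s, hs⟩ := exists_surjective_nat ι
  set e0 : ℕ → Ordinal := fun n => g (s n) with he0
  have h_e0_lt : ∀ n, e0 n < κ.ord := fun n => hg ▸ Ordinal.lt_lsub g _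
  have h_e0_cof : ∀ α < κ.ord, ∃ n, α ≤ e0 n := by
    intro α hα
    rw [← hg] at hα
    obtain ⟨i, hi⟩ := Ordinal.lt_lsub_iff.1 hα
    obtain ⟨n, rfl⟩ := hs i
    exact ⟨n, hi⟩
  -- a strictly monotone cofinal sequence
  set γ : ℕ → Ordinal := fun n => Nat.rec (e0 0) (fun m prev => max (prev + 1) (e0 (m + 1))) n
    with hγ
  have hγS : ∀ n, γ (n + 1) = max (γ n + 1) (e0 (n + 1)) := fun n => rfl
  have hγlt : ∀ n, γ n < κ.ord := by
    intro n
    induction n with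
    | zero => exact h_e0_lt 0
    | succ m ih =>
      rw [hγS]
      exact max_lt (Ordinal.add_one_eq_succ (γ m) ▸ hlim.succ_lt ih) (h_e0_lt (m + 1))
  have hγmono : StrictMono γ := by
    apply strictMono_nat_of_lt_succ
    intro n
    rw [hγS]
    exact lt_of_lt_of_le (lt_of_lt_of_le (Order.lt_succ (γ n))
      (le_of_eq (Ordinal.add_one_eq_succ (γ n)).symm)) (le_max_left _ _)
  have hγcof : ∀ α < κ.ord, ∃ n, α ≤ γ n := by
    intro α hα
    obtain ⟨n, hn⟩ := h_e0_cof α hα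
    cases n with
    | zero => exact ⟨0, hn⟩
    | succ m => exact ⟨m + 1, hn.trans ((hγS m) ▸ le_max_right _ _)⟩
  -- run the tower machinery
  set f : Ordinal → ℕ → ℕ := fun η n => c η (γ n) with hf
  have inv := tseq_inv hlt f
  set A : Set ℕ := tseq f κ.ord with hA
  have hAinf : A.Infinite := (inv κ.ord le_rfl).1
  refine ⟨γ '' A, ?_, ?_, ?_⟩
  · rintro β ⟨n, _, rfl⟩
    exact hγlt n
  · intro α hα
    obtain ⟨n, hn⟩ := hγcof α hα
    obtain ⟨m, hmA, hm⟩ := hAinf.exists_gt n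
    exact ⟨γ m, ⟨m, hmA, rfl⟩, hn.trans (hγmono.monotone hm.le)⟩
  · intro η hη heq
    have h1 : (A \ tseq f η).Finite := (inv κ.ord le_rfl).2.1 η hη
    have h2 : ((f η '' tseq f η)ᶜ).Infinite := (inv η hη.le).2.2
    have hsub : (f η '' tseq f η)ᶜ \ (f η '' (A \ tseq f η)) ⊆ (f η '' A)ᶜ := by
      rintro k ⟨hk1, hk2⟩ ⟨m, hm, rfl⟩
      by_cases hmem : m ∈ tseq f η
      · exact hk1 ⟨m, hmem, rfl⟩
      · exact hk2 ⟨m, ⟨hm, hmem⟩, rfl⟩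
    obtain ⟨k, hk⟩ := ((h2.diff (h1.image (f η))).mono hsub).nonempty
    have hkmem : k ∈ {n : ℕ | ∃ β ∈ γ '' A, η < β ∧ c η β = n} := heq ▸ Set.mem_univ k
    obtain ⟨β, ⟨m, hmA, rfl⟩, _, hc⟩ := hkmem
    exact hk ⟨m, hmA, hc⟩
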